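/- Let d ≥ 1 be a real number and let G = (V,E) be a finite simple graph on N = |V| vertices such that for every S ⊆ V, the number of edges with exactly one endpoint in S is at least (d/5)·min(|S|, N−|S|). Let F ⊆ E satisfy |F| < N/500. Then the graph (V, E∖F) has a connected component with at least N·(1 − 1/(50d)) vertices. -/

import Mathlib

open Finset
open scoped Classical

noncomputable section

abbrev F2 : Type := ZMod 2

/-- The sum, in 𝔽₂, of the values of an edge-assignment `x` (defined on the edges in the
set `S`) over the edges of `S` incident to the vertex `u`. -/
def vdeg {V : Type*} [Fintype V] (S : Set (Sym2 V)) (x : {e : Sym2 V // e ∈ S} → F2)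
    (u : V) : F2 :=
  ∑ e : {e : Sym2 V // e ∈ S}, if u ∈ (e : Sym2 V) then x e else 0

/-- deleting fewer than `|V|/500` edges from a graph with
`(d/5)·min(|S|,|V|−|S|)` edge expansion leaves a connected component on at least a
`1 − 1/(50d)` fraction of the vertices (Lemma `isoperimetric`). -/
theorem stmt14 {V : Type*} [Fintype V] (d : ℝ) (hd : 1 ≤ d) (G : SimpleGraph V)
    (hexp : ∀ S : Finset V,
      d / 5 * min (S.card : ℝ) ((Fintype.card V : ℝ) - (S.card : ℝ)) ≤
        ((G.edgeFinset.filter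
            (fun e => ∃ a ∈ S, ∃ b ∉ S, e = s(a, b))).card : ℝ))
    (F : Finset (Sym2 V)) (hF : ↑F ⊆ G.edgeSet)
    (hFcard : (F.card : ℝ) < (Fintype.card V : ℝ) / 500) :
    ∃ C : (G.deleteEdges ↑F).ConnectedComponent,
      (Fintype.card V : ℝ) * (1 - 1 / (50 * d)) ≤ (C.supp.ncard : ℝ) := by
  classical
  have hd0 : (0:ℝ) < d := lt_of_lt_of_le one_pos hd
  set N : ℕ := Fintype.card V with hN
  have hN0 : (0:ℝ) < (N:ℝ) := by
    have h0 : (0:ℝ) ≤ (F.card:ℝ) := Nat.cast_nonneg _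
    nlinarith
  set G' : SimpleGraph V := G.deleteEdges ↑F with hG'
  -- key: any union of components has small min side
  have hkey : ∀ S : Finset V, (∀ a ∈ S, ∀ b, G'.Adj a b → b ∈ S) →
      min (S.card:ℝ) ((N:ℝ) - S.card) < (N:ℝ)/(100*d) := by
    intro S hS
    have hsub : (G.edgeFinset.filter (fun e => ∃ a ∈ S, ∃ b ∉ S, e = s(a,b))) ⊆ F := by
      intro e he
      rw [Finset.mem_filter] at he
      obtain ⟨heE, a, ha, b, hb, rfl⟩ := he
      by_contra hf
      refine hb (hS a ha b ?_)
      rw [hG', SimpleGraph.deleteEdges_adj]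
      exact ⟨(SimpleGraph.mem_edgeSet G).mp (SimpleGraph.mem_edgeFinset.mp heE), hf⟩
    have hcard : ((G.edgeFinset.filter (fun e => ∃ a ∈ S, ∃ b ∉ S, e = s(a,b))).card : ℝ)
        ≤ (F.card:ℝ) := Nat.cast_le.mpr (Finset.card_le_card hsub)
    have h2 : d/5 * min (S.card:ℝ) ((N:ℝ) - S.card) < (N:ℝ)/500 :=
      lt_of_le_of_lt ((hexp S).trans hcard) hFcard
    rw [lt_div_iff₀ (by positivity)]
    nlinarith [h2]
  haveI : Fintype G'.ConnectedComponent := Fintype.ofFinite _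
  set sfin : G'.ConnectedComponent → Finset V :=
    fun c => Finset.univ.filter (fun v => G'.connectedComponentMk v = c) with hsfin
  have hclosed : ∀ A : Finset G'.ConnectedComponent,
      (∀ a ∈ A.biUnion sfin, ∀ b, G'.Adj a b → b ∈ A.biUnion sfin) := by
    intro A a ha b hab
    rw [Finset.mem_biUnion] at ha ⊢
    obtain ⟨c, hc, hac⟩ := ha
    refine ⟨c, hc, ?_⟩
    rw [hsfin, Finset.mem_filter] at hac ⊢
    refine ⟨Finset.mem_univ _, ?_⟩
    rw [← hac.2]
    exact (SimpleGraph.ConnectedComponent.sound hab.symm.reachable)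
  have hdisj : ∀ c ∈ (Finset.univ : Finset G'.ConnectedComponent), ∀ c' ∈ Finset.univ,
      c ≠ c' → Disjoint (sfin c) (sfin c') := by
    intro c _ c' _ hne
    rw [Finset.disjoint_left]
    intro v hv hv'
    rw [hsfin, Finset.mem_filter] at hv hv'
    exact hne (hv.2 ▸ hv'.2 ▸ rfl)
  have hbicard : ∀ A : Finset G'.ConnectedComponent,
      ((A.biUnion sfin).card : ℝ) = ∑ c ∈ A, ((sfin c).card : ℝ) := by
    intro A
    rw [Finset.card_biUnion (fun c hc c' hc' h => hdisj c (Finset.mem_univ _) c' (Finset.mem_univ _) h)]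
    push_cast
    rfl
  have hsum : ∑ c : G'.ConnectedComponent, ((sfin c).card : ℝ) = (N:ℝ) := by
    rw [← hbicard Finset.univ]
    congr 1
    rw [hN, ← Finset.card_univ]
    congr 1
    ext v
    simp [hsfin]
  have hncard : ∀ c : G'.ConnectedComponent, (c.supp.ncard : ℝ) = ((sfin c).card : ℝ) := by
    intro c
    rw [Set.ncard_eq_toFinset_card']
    congr 2
    ext v
    simp [hsfin, SimpleGraph.ConnectedComponent.mem_supp_iff]
  have hclosed1 : ∀ c : G'.ConnectedComponent,
      (∀ a ∈ sfin c, ∀ b, G'.Adj a b → b ∈ sfin c) := by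
    intro c a ha b hab
    have := hclosed {c} a (by simpa using ha) b hab
    simpa using this
  by_cases hbig : ∃ c : G'.ConnectedComponent, (N:ℝ)/2 ≤ ((sfin c).card : ℝ)
  · obtain ⟨c, hc⟩ := hbig
    refine ⟨c, ?_⟩
    have hk := hkey (sfin c) (hclosed1 c)
    have hle : ((sfin c).card : ℝ) ≤ (N:ℝ) := by
      rw [← hsum]
      exact Finset.single_le_sum (f := fun c : G'.ConnectedComponent => ((sfin c).card : ℝ)) (fun i _ => by positivity) (Finset.mem_univ c)
    rw [min_eq_right (by linarith)] at hk
    rw [hncard c]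
    have h1 : (N:ℝ)/(100*d) ≤ (N:ℝ)/(50*d) := by
      gcongr
      linarith
    have h2 : (N:ℝ)*(1 - 1/(50*d)) = (N:ℝ) - (N:ℝ)/(50*d) := by
      field_simp
    linarith
  · exfalso
    push_neg at hbig
    set x : ℝ := (N:ℝ)/(100*d) with hx
    have hx0 : 0 < x := by positivity
    have hxmul : x * (100*d) = (N:ℝ) := by
      rw [hx]; field_simp
    have hsmall : ∀ c : G'.ConnectedComponent, ((sfin c).card : ℝ) < x := by
      intro c
      have hk := hkey (sfin c) (hclosed1 c)
      rw [min_eq_left (by linarith [hbig c])] at hk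
      exact hk
    have hxN : x ≤ (N:ℝ) := by nlinarith
    have hne : (Finset.univ.filter
        (fun A : Finset G'.ConnectedComponent => x ≤ ∑ c ∈ A, ((sfin c).card : ℝ))).Nonempty := by
      refine ⟨Finset.univ, ?_⟩
      rw [Finset.mem_filter]
      exact ⟨Finset.mem_univ _, by rw [hsum]; exact hxN⟩
    obtain ⟨A, hA, hAmin⟩ := Finset.exists_min_image _ Finset.card hne
    rw [Finset.mem_filter] at hA
    have hAsum : x ≤ ∑ c ∈ A, ((sfin c).card : ℝ) := hA.2
    have hAne : A.Nonempty := by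
      rcases A.eq_empty_or_nonempty with h | h
      · exfalso; rw [h, Finset.sum_empty] at hAsum; linarith
      · exact h
    obtain ⟨c0, hc0⟩ := hAne
    have herase : ∑ c ∈ A.erase c0, ((sfin c).card : ℝ) < x := by
      by_contra h
      push_neg at h
      have hmem : A.erase c0 ∈ Finset.univ.filter
          (fun A : Finset G'.ConnectedComponent => x ≤ ∑ c ∈ A, ((sfin c).card : ℝ)) := by
        rw [Finset.mem_filter]; exact ⟨Finset.mem_univ _, h⟩
      have := hAmin _ hmem
      have := Finset.card_erase_lt_of_mem hc0
      omega
    have hsumA2 : ∑ c ∈ A, ((sfin c).card : ℝ) < 2*x := by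
      rw [← Finset.sum_erase_add A _ hc0]
      have := hsmall c0
      linarith
    have hk := hkey (A.biUnion sfin) (hclosed A)
    rw [hbicard A] at hk
    have h3x : 3*x ≤ (N:ℝ) := by nlinarith
    have hmin : x ≤ min (∑ c ∈ A, ((sfin c).card : ℝ)) ((N:ℝ) - ∑ c ∈ A, ((sfin c).card : ℝ)) :=
      le_min hAsum (by linarith)
    linarith
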